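/- Let A be an invertible n×n complex matrix, let ‖·‖₁ and ‖·‖₂ be unitarily invariant norms on the space of n×n complex matrices, and let H₁, H₂ be Hermitian n×n complex matrices. Then the function t ↦ log(‖e^{tH₁} A e^{-tH₂}‖₁) + log(‖e^{tH₂} A⁻¹ e^{-tH₁}‖₂) is convex on ℝ. (Equivalently, the log-condition-number function K(X,Y) ↦ log(‖XAY⁻¹‖₁·‖(XAY⁻¹)⁻¹‖₂) is geodesically convex along every geodesic t ↦ K(e^{tH₁}X, e^{tH₂}Y) of the symmetric space G/K.) -/

import Mathlib

open Matrix

/-- The matrix exponential of a square complex matrix. -/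
noncomputable def mexp {k : ℕ} (A : Matrix (Fin k) (Fin k) ℂ) : Matrix (Fin k) (Fin k) ℂ :=
  NormedSpace.exp A

/-- `N` is a unitarily invariant matrix norm on `m × n` complex matrices:
it is a norm and satisfies `N (U * A * V) = N A` for all unitary `U`, `V`. -/
structure IsUnitarilyInvariantNorm (m n : ℕ) (N : Matrix (Fin m) (Fin n) ℂ → ℝ) : Prop where
  eq_zero_iff : ∀ A, N A = 0 ↔ A = 0
  smul : ∀ (c : ℂ) (A), N (c • A) = ‖c‖ * N A
  triangle : ∀ A B, N (A + B) ≤ N A + N B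
  unitary_inv : ∀ (U : Matrix (Fin m) (Fin m) ℂ) (V : Matrix (Fin n) (Fin n) ℂ),
    U ∈ Matrix.unitaryGroup (Fin m) ℂ → V ∈ Matrix.unitaryGroup (Fin n) ℂ →
    ∀ A, N (U * A * V) = N A

namespace LCNAux

open NormedSpace Complex.HadamardThreeLines

abbrev Mat (n : ℕ) := Matrix (Fin n) (Fin n) ℂ

/-- Type synonym carrying the norm `N`. -/
def MatN (n : ℕ) (_N : Matrix (Fin n) (Fin n) ℂ → ℝ) : Type := Matrix (Fin n) (Fin n) ℂ

variable {n : ℕ} {N : Mat n → ℝ}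

lemma N_zero (hN : IsUnitarilyInvariantNorm n n N) : N 0 = 0 := (hN.eq_zero_iff 0).2 rfl

lemma N_neg (hN : IsUnitarilyInvariantNorm n n N) (A : Mat n) : N (-A) = N A := by
  have h := hN.smul (-1) A
  simpa using h

lemma N_nonneg (hN : IsUnitarilyInvariantNorm n n N) (A : Mat n) : 0 ≤ N A := by
  have h := hN.triangle A (-A)
  rw [add_neg_cancel, N_zero hN, N_neg hN] at h
  linarith

lemma N_pos (hN : IsUnitarilyInvariantNorm n n N) {A : Mat n} (hA : A ≠ 0) : 0 < N A :=
  lt_of_le_of_ne (N_nonneg hN A) (fun h => hA ((hN.eq_zero_iff A).1 h.symm))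

/-- `exp (c • H)` is unitary for Hermitian `H` and purely imaginary `c`. -/
lemma exp_unitary {H : Mat n} (hH : H.IsHermitian) (c : ℂ) (hc : star c = -c) :
    NormedSpace.exp (c • H) ∈ Matrix.unitaryGroup (Fin n) ℂ := by
  rw [Matrix.mem_unitaryGroup_iff]
  have hst : star (NormedSpace.exp (c • H)) = NormedSpace.exp (-(c • H)) := by
    rw [Matrix.star_eq_conjTranspose, ← Matrix.exp_conjTranspose]
    congr 1
    rw [Matrix.conjTranspose_smul, hH.eq, hc, neg_smul]
  rw [hst, ← Matrix.exp_add_of_commute (c • H) (-(c • H)) (Commute.neg_right (Commute.refl _)),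
    add_neg_cancel, NormedSpace.exp_zero]

/-- Splitting `exp (z • H)` into unitary (imaginary) and real parts, unitary on the left. -/
lemma exp_split_left (H : Mat n) (z : ℂ) :
    NormedSpace.exp (z • H) =
      NormedSpace.exp ((Complex.I * z.im) • H) * NormedSpace.exp ((z.re : ℂ) • H) := by
  rw [← Matrix.exp_add_of_commute _ _ (((Commute.refl H).smul_left _).smul_right _),
    ← add_smul]
  have hz : Complex.I * z.im + (z.re : ℂ) = z := by rw [mul_comm, add_comm]; exact z.re_add_im
  rw [hz]

/-- Splitting `exp (z • H)`, unitary on the right. -/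
lemma exp_split_right (H : Mat n) (z : ℂ) :
    NormedSpace.exp (z • H) =
      NormedSpace.exp ((z.re : ℂ) • H) * NormedSpace.exp ((Complex.I * z.im) • H) := by
  rw [← Matrix.exp_add_of_commute _ _ (((Commute.refl H).smul_left _).smul_right _),
    ← add_smul]
  have hz : (z.re : ℂ) + Complex.I * z.im = z := by rw [mul_comm]; exact z.re_add_im
  rw [hz]

/-- Unitary invariance of `N` along vertical lines. -/
lemma N_line_invariant (hN : IsUnitarilyInvariantNorm n n N)
    {H₁ H₂ : Mat n} (hH₁ : H₁.IsHermitian) (hH₂ : H₂.IsHermitian) (A : Mat n) (w : ℂ) :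
    N (NormedSpace.exp (w • H₁) * A * NormedSpace.exp ((-w) • H₂)) =
      N (NormedSpace.exp ((w.re : ℂ) • H₁) * A *
        NormedSpace.exp ((-(w.re) : ℂ) • H₂)) := by
  have hIm : star (Complex.I * (w.im : ℂ)) = -(Complex.I * w.im) := by
    simp [Complex.ext_iff]
  have hIm' : star (Complex.I * ((-w).im : ℂ)) = -(Complex.I * (-w).im) := by
    simp [Complex.ext_iff]
  rw [exp_split_left H₁ w, exp_split_right H₂ (-w)]
  have h1 := hN.unitary_inv _ _ (exp_unitary hH₁ _ hIm) (exp_unitary hH₂ _ hIm')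
    (NormedSpace.exp ((w.re : ℂ) • H₁) * A * NormedSpace.exp (((-w).re : ℂ) • H₂))
  calc N (NormedSpace.exp ((Complex.I * w.im) • H₁) * NormedSpace.exp ((w.re : ℂ) • H₁) * A *
          (NormedSpace.exp (((-w).re : ℂ) • H₂) * NormedSpace.exp ((Complex.I * (-w).im) • H₂)))
      = N (NormedSpace.exp ((Complex.I * w.im) • H₁) *
          (NormedSpace.exp ((w.re : ℂ) • H₁) * A * NormedSpace.exp (((-w).re : ℂ) • H₂)) *
          NormedSpace.exp ((Complex.I * (-w).im) • H₂)) := by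
        congr 1
        simp only [mul_assoc]
    _ = N (NormedSpace.exp ((w.re : ℂ) • H₁) * A * NormedSpace.exp (((-w).re : ℂ) • H₂)) := h1
    _ = N (NormedSpace.exp ((w.re : ℂ) • H₁) * A * NormedSpace.exp ((-(w.re) : ℂ) • H₂)) := by
        norm_num

/-- The Hadamard three-lines interpolation bound for `x ↦ N (e^{xH₁} A e^{-xH₂})`. -/
lemma key (hN : IsUnitarilyInvariantNorm n n N)
    (A H₁ H₂ : Mat n) (hH₁ : H₁.IsHermitian) (hH₂ : H₂.IsHermitian)
    (s t u : ℝ) (hu0 : 0 ≤ u) (hu1 : u ≤ 1) :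
    N (NormedSpace.exp ((((1-u)*s + u*t : ℝ) : ℂ) • H₁) * A *
        NormedSpace.exp ((-((1-u)*s + u*t : ℝ) : ℂ) • H₂)) ≤
      N (NormedSpace.exp ((s : ℂ) • H₁) * A * NormedSpace.exp ((-s : ℂ) • H₂)) ^ (1-u) *
      N (NormedSpace.exp ((t : ℂ) • H₁) * A * NormedSpace.exp ((-t : ℂ) • H₂)) ^ u := by
  letI : SeminormedRing (Mat n) := Matrix.linftyOpSemiNormedRing
  letI : NormedRing (Mat n) := Matrix.linftyOpNormedRing
  letI : NormedAlgebra ℂ (Mat n) := Matrix.linftyOpNormedAlgebra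
  letI : AddCommGroup (MatN n N) := inferInstanceAs (AddCommGroup (Mat n))
  letI : Module ℂ (MatN n N) := inferInstanceAs (Module ℂ (Mat n))
  letI : NormedAddCommGroup (MatN n N) := AddGroupNorm.toNormedAddCommGroup
    { toFun := N
      map_zero' := N_zero hN
      add_le' := hN.triangle
      neg' := N_neg hN
      eq_zero_of_map_eq_zero' := fun X h => (hN.eq_zero_iff X).1 h }
  letI : NormedSpace ℂ (MatN n N) := ⟨fun c x => le_of_eq (hN.smul c x)⟩
  set e : Mat n →ₗ[ℂ] MatN n N :=
    { toFun := fun X => X, map_add' := fun _ _ => rfl, map_smul' := fun _ _ => rfl } with he_def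
  have hnorm : ∀ X : Mat n, ‖e X‖ = N X := fun _ => rfl
  -- the analytic function on the strip
  set w : ℂ → ℂ := fun z => (s : ℂ) + z * ((t : ℂ) - (s : ℂ)) with hw_def
  set F : ℂ → Mat n := fun z =>
    NormedSpace.exp (w z • H₁) * A * NormedSpace.exp ((-(w z)) • H₂) with hF_def
  set f : ℂ → MatN n N := fun z => e (F z) with hf_def
  -- differentiability
  have hw : Differentiable ℂ w := (differentiable_id.mul_const _).const_add _
  have he1 : Differentiable ℂ (fun z : ℂ => NormedSpace.exp (z • H₁)) :=
    fun z => (hasDerivAt_exp_smul_const (𝕂 := ℂ) H₁ z).differentiableAt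
  have he2 : Differentiable ℂ (fun z : ℂ => NormedSpace.exp (z • H₂)) :=
    fun z => (hasDerivAt_exp_smul_const (𝕂 := ℂ) H₂ z).differentiableAt
  have hF : Differentiable ℂ F :=
    ((he1.comp hw).mul (differentiable_const A)).mul (he2.comp hw.neg)
  have hf : Differentiable ℂ f :=
    (LinearMap.toContinuousLinearMap e).differentiable.comp hF
  -- constancy of the norm along vertical lines
  have hline : ∀ z : ℂ, ‖f z‖ = N (NormedSpace.exp (((w z).re : ℂ) • H₁) * A *
      NormedSpace.exp ((-((w z).re) : ℂ) • H₂)) := fun z => by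
    rw [hnorm]
    exact N_line_invariant hN hH₁ hH₂ A (w z)
  have hre : ∀ z : ℂ, (w z).re = s + z.re * (t - s) := fun z => by
    simp [hw_def, Complex.add_re, Complex.mul_re]
  -- boundedness on the strip
  have hφ : Continuous (fun x : ℝ => ‖f ((x : ℝ) : ℂ)‖) :=
    (hf.continuous.comp Complex.continuous_ofReal).norm
  have hB : BddAbove ((norm ∘ f) '' verticalClosedStrip 0 1) := by
    have hsub : (norm ∘ f) '' verticalClosedStrip 0 1 ⊆
        (fun x : ℝ => ‖f ((x : ℝ) : ℂ)‖) '' Set.Icc 0 1 := by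
      rintro y ⟨z, hz, rfl⟩
      refine ⟨z.re, hz, ?_⟩
      have h1 := hline z
      have h2 := hline ((z.re : ℝ) : ℂ)
      have : (w ((z.re : ℝ) : ℂ)).re = (w z).re := by
        rw [hre, hre, Complex.ofReal_re]
      simp only [Function.comp_apply]
      rw [h1, h2, this]
    exact ((isCompact_Icc.image hφ).bddAbove).mono hsub
  -- boundary bounds
  have ha : ∀ z ∈ Complex.re ⁻¹' {0}, ‖f z‖ ≤
      N (NormedSpace.exp ((s : ℂ) • H₁) * A * NormedSpace.exp ((-s : ℂ) • H₂)) := by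
    intro z hz
    have hz0 : z.re = 0 := hz
    rw [hline z, hre z, hz0]
    norm_num
  have hb : ∀ z ∈ Complex.re ⁻¹' {1}, ‖f z‖ ≤
      N (NormedSpace.exp ((t : ℂ) • H₁) * A * NormedSpace.exp ((-t : ℂ) • H₂)) := by
    intro z hz
    have hz1 : z.re = 1 := hz
    rw [hline z, hre z, hz1]
    norm_num
  -- apply Hadamard
  have hu : ((u : ℝ) : ℂ) ∈ verticalClosedStrip 0 1 := by
    simp only [verticalClosedStrip, Set.mem_preimage, Complex.ofReal_re]
    exact ⟨hu0, hu1⟩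
  have H := Complex.HadamardThreeLines.norm_le_interp_of_mem_verticalClosedStrip' (f := f) zero_lt_one hu
    hf.diffContOnCl hB ha hb
  rw [Complex.ofReal_re] at H
  simp only [sub_zero, div_one] at H
  have hval : ‖f ((u : ℝ) : ℂ)‖ = N (NormedSpace.exp ((((1-u)*s + u*t : ℝ) : ℂ) • H₁) * A *
      NormedSpace.exp ((-((1-u)*s + u*t : ℝ) : ℂ) • H₂)) := by
    rw [hnorm]
    have harg : w ((u : ℝ) : ℂ) = ((((1-u)*s + u*t : ℝ) : ℂ)) := by
      rw [hw_def]
      push_cast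
      ring
    simp only [hF_def, harg]
  rw [hval] at H
  exact H


lemma logN_convexOn (n : ℕ) (N : Mat n → ℝ) (hN : IsUnitarilyInvariantNorm n n N)
    (A : Mat n) (hA : IsUnit A) (H₁ H₂ : Mat n) (hH₁ : H₁.IsHermitian) (hH₂ : H₂.IsHermitian) :
    ConvexOn ℝ Set.univ (fun t : ℝ =>
      Real.log (N (mexp ((t : ℂ) • H₁) * A * mexp ((-t : ℂ) • H₂)))) := by
  rcases Nat.eq_zero_or_pos n with rfl | hn
  · have hz : ∀ X : Mat 0, X = 0 := fun X => by
      ext i j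
      exact i.elim0
    have heq : (fun t : ℝ => Real.log (N (mexp ((t : ℂ) • H₁) * A * mexp ((-t : ℂ) • H₂))))
        = fun _ => Real.log (N 0) := funext fun t => by rw [hz (mexp _ * A * mexp _)]
    rw [heq]
    exact convexOn_const _ convex_univ
  · haveI : Nonempty (Fin n) := ⟨⟨0, hn⟩⟩
    haveI : Nontrivial (Mat n) := ⟨1, 0, fun h => by
      have h00 := congrFun (congrFun h ⟨0, hn⟩) ⟨0, hn⟩
      simp [Matrix.one_apply] at h00⟩
    have hpos : ∀ x : ℝ, 0 < N (NormedSpace.exp ((x : ℂ) • H₁) * A *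
        NormedSpace.exp ((-x : ℂ) • H₂)) := fun x =>
      N_pos hN (((Matrix.isUnit_exp _).mul hA).mul (Matrix.isUnit_exp _)).ne_zero
    refine ⟨convex_univ, fun p _ q _ a b ha hb hab => ?_⟩
    have ha1 : a = 1 - b := by linarith
    subst ha1
    simp only [smul_eq_mul, mexp]
    have K := key hN A H₁ H₂ hH₁ hH₂ p q b hb (by linarith)
    refine le_trans (Real.log_le_log (hpos _) K) ?_
    rw [Real.log_mul (Real.rpow_pos_of_pos (hpos p) _).ne'
        (Real.rpow_pos_of_pos (hpos q) _).ne',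
      Real.log_rpow (hpos p), Real.log_rpow (hpos q)]

end LCNAux

theorem logConditionNumber_convex (n : ℕ) (A : Matrix (Fin n) (Fin n) ℂ)
    (hA : IsUnit A)
    (N₁ N₂ : Matrix (Fin n) (Fin n) ℂ → ℝ)
    (hN₁ : IsUnitarilyInvariantNorm n n N₁) (hN₂ : IsUnitarilyInvariantNorm n n N₂)
    (H₁ H₂ : Matrix (Fin n) (Fin n) ℂ)
    (hH₁ : H₁.IsHermitian) (hH₂ : H₂.IsHermitian) :
    ConvexOn ℝ Set.univ (fun t : ℝ =>
      Real.log (N₁ (mexp ((t : ℂ) • H₁) * A * mexp ((-t : ℂ) • H₂))) +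
      Real.log (N₂ (mexp ((t : ℂ) • H₂) * A⁻¹ * mexp ((-t : ℂ) • H₁)))) := by
  refine (LCNAux.logN_convexOn n N₁ hN₁ A hA H₁ H₂ hH₁ hH₂).add
    (LCNAux.logN_convexOn n N₂ hN₂ A⁻¹ ?_ H₂ H₁ hH₂ hH₁)
  rw [Matrix.nonsing_inv_eq_ringInverse]
  exact isUnit_ringInverse.2 hA
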